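/- arXiv:1006.2500 — 4 statements merged into one kernel-verified Lean document; each statement's English description precedes it below -/
import Mathlib

section
/- Let p be a prime, n a positive integer, q an integer coprime to p, and k a positive integer. Then the number of k-cycles with a marked initial vertex in the exponentiation graph Γ_{p,n,q} (equivalently, the trace of the k-th power of its adjacency matrix) is at most (p-1)^k. -/
open Classical

noncomputable def expAdj (p n : ℕ) (q : ℤ) [Fact p.Prime] :
    Matrix (ZMod (p ^ n)) (ZMod (p ^ n)) ℤ := fun x w =>
  if ∃ y : ℕ, (y : ZMod (p ^ n)) = x ∧ ((q : ZMod (p ^ n)) ^ y = w) then 1 else 0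

/-- Counting naturals below `D` in a residue class mod `d`, when `d ∣ D`. -/
private lemma card_filter_mod {D d : ℕ} (hd : 0 < d) (hdD : d ∣ D) (r : ℕ) :
    ((Finset.range D).filter fun t => t % d = r % d).card = D / d := by
  rw [← Finset.card_range (D / d)]
  apply Finset.card_bij' (fun a _ => a / d) (fun b _ => d * b + r % d)
  · intro a ha
    simp only [Finset.mem_filter, Finset.mem_range] at ha
    exact Finset.mem_range.mpr (Nat.div_lt_div_of_lt_of_dvd hdD ha.1)
  · intro b hb
    simp only [Finset.mem_range] at hb
    simp only [Finset.mem_filter, Finset.mem_range]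
    constructor
    · have h1 : b + 1 ≤ D / d := hb
      have h2 : d * (b + 1) ≤ d * (D / d) := Nat.mul_le_mul_left d h1
      rw [Nat.mul_div_cancel' hdD, Nat.mul_add, Nat.mul_one] at h2
      have : r % d < d := Nat.mod_lt r hd
      omega
    · rw [Nat.mul_add_mod]
      exact Nat.mod_mod_of_dvd r dvd_rfl
  · intro a ha
    simp only [Finset.mem_filter, Finset.mem_range] at ha
    rw [← ha.2]
    exact Nat.div_add_mod a d
  · intro b hb
    simp only [Finset.mem_range] at hb
    rw [Nat.mul_add_div hd, Nat.div_eq_of_lt (Nat.mod_lt r hd), Nat.add_zero]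

/-- Solving the congruence `p^(s+1) * T ≡ δ (mod M)` when `p^s ∣ δ` and the
`p`-part of `M` is at most `p^s`. -/
private lemma solve_cong (p s e M : ℕ) (hp : p.Prime) (hM : M ∣ p ^ s * e)
    (he : p.Coprime e) (δ : ℤ) (hδ : ((p:ℤ)) ^ s ∣ δ) :
    ∃ T : ℕ, ((p:ℤ) ^ (s+1) * T) ≡ δ [ZMOD M] := by
  have hene : e ≠ 0 := by
    rintro rfl
    simp [Nat.coprime_zero_right, hp.ne_one] at he
  have hMne : M ≠ 0 := by
    rintro rfl
    rw [zero_dvd_iff] at hM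
    exact absurd hM (Nat.mul_ne_zero (pow_ne_zero _ hp.pos.ne') hene)
  -- p-part and p'-part of M
  set v := M.factorization p with hv
  set a := p ^ v with ha
  set b := M / a with hb
  have hab : a * b = M := Nat.ordProj_mul_ordCompl_eq_self M p
  have hbcop : p.Coprime b := Nat.coprime_ordCompl hp hMne
  have hbne : b ≠ 0 := by
    rintro h; rw [h, mul_zero] at hab; exact hMne hab.symm
  have hvs : v ≤ s := by
    have h1 := (Nat.factorization_le_iff_dvd hMne (Nat.mul_ne_zero (pow_ne_zero _ hp.pos.ne') hene)).mpr hM p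
    have h2 : (p ^ s * e).factorization p = s := by
      rw [Nat.factorization_mul (pow_ne_zero _ hp.pos.ne') hene, Nat.Prime.factorization_pow hp]
      simp [Nat.factorization_eq_zero_of_not_dvd (hp.coprime_iff_not_dvd.mp he)]
    omega
  -- inverse of p mod b
  obtain ⟨δ', rfl⟩ := hδ
  haveI : NeZero b := ⟨hbne⟩
  set u := ZMod.unitOfCoprime p hbcop with hu
  set c := ((u⁻¹ : (ZMod b)ˣ) : ZMod b).val with hc
  have hpc : (b:ℤ) ∣ (p * c - 1 : ℤ) := by
    have h1 : ((p * c : ℕ) : ZMod b) = 1 := by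
      push_cast
      rw [hc]
      have : ((((u⁻¹ : (ZMod b)ˣ) : ZMod b)).val : ZMod b) = ((u⁻¹ : (ZMod b)ˣ) : ZMod b) := by
        simp [ZMod.natCast_val, ZMod.cast_id]
      rw [this]
      have : ((p:ℕ) : ZMod b) = (u : ZMod b) := (ZMod.coe_unitOfCoprime p hbcop).symm
      rw [this, ← Units.val_mul, mul_inv_cancel, Units.val_one]
    have h2 : (p * c : ℕ) ≡ 1 [MOD b] := (ZMod.natCast_eq_natCast_iff _ _ _).mp (by rw [Nat.cast_one]; exact h1)
    have h3 := (Nat.modEq_iff_dvd).mp h2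
    -- h3 : (b:ℤ) ∣ 1 - (p*c)
    have := dvd_neg.mpr h3
    push_cast at this ⊢
    convert this using 1
    · rfl
    ring
  -- the integer solution
  set T₀ : ℤ := (c : ℤ) * δ' with hT0
  have hsol : (M:ℤ) ∣ ((p:ℤ) ^ (s+1) * T₀ - (p:ℤ)^s * δ') := by
    have key : (p:ℤ) ^ (s+1) * T₀ - (p:ℤ)^s * δ' = (p:ℤ)^s * δ' * (p * c - 1) := by
      rw [hT0]; ring
    rw [key, ← hab, Nat.cast_mul]
    apply IsCoprime.mul_dvd
    · exact_mod_cast Nat.isCoprime_iff_coprime.mpr (Nat.Coprime.pow_left v hbcop)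
    · have hpow : ((a:ℕ):ℤ) ∣ (p:ℤ)^s := by exact_mod_cast pow_dvd_pow p hvs
      exact Dvd.dvd.mul_right (hpow.mul_right δ') _
    · exact Dvd.dvd.mul_left hpc _
  -- lift T₀ to a natural number
  have hMpos : (0:ℤ) < (M:ℤ) := by exact_mod_cast Nat.pos_of_ne_zero hMne
  refine ⟨(T₀ % M).toNat, ?_⟩
  have hnn : (0:ℤ) ≤ T₀ % M := Int.emod_nonneg T₀ (by exact_mod_cast hMne)
  have hcast : (((T₀ % M).toNat : ℕ) : ℤ) = T₀ % M := Int.toNat_of_nonneg hnn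
  calc ((p:ℤ) ^ (s+1) * ((T₀ % M).toNat : ℤ)) = (p:ℤ)^(s+1) * (T₀ % M) := by rw [hcast]
    _ ≡ (p:ℤ)^(s+1) * T₀ [ZMOD M] := Int.ModEq.mul_left _ (Int.emod_emod_of_dvd T₀ dvd_rfl)
    _ ≡ (p:ℤ)^s * δ' [ZMOD M] := Int.modEq_iff_dvd.mpr (by
        rw [show (p:ℤ)^s*δ' - (p:ℤ)^(s+1)*T₀ = -((p:ℤ)^(s+1)*T₀ - (p:ℤ)^s*δ') by ring]
        exact dvd_neg.mpr hsol)
section Aux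

variable (p : ℕ) [hp : Fact p.Prime] (q : ℤ)

private lemma isUnit_q (hq : IsCoprime q (p:ℤ)) (m : ℕ) : IsUnit ((q : ZMod (p^m))) := by
  obtain ⟨a, b, hab⟩ := (hq.pow_right : IsCoprime q ((p:ℤ)^m))
  apply IsUnit.of_mul_eq_one ((a : ZMod (p^m)))
  have h0 : ((p : ZMod (p^m)))^m = 0 := by
    have := ZMod.natCast_self (p^m)
    push_cast at this
    exact this
  have := congrArg (fun z : ℤ => (z : ZMod (p^m))) hab
  push_cast at this
  rw [h0, mul_zero, add_zero] at this
  rw [mul_comm] at this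
  exact this

private lemma unit_pow_eq_pow_iff {M : Type*} [Monoid M] (u : Mˣ) (a b : ℕ) :
    (u:M)^a = (u:M)^b ↔ a ≡ b [MOD orderOf ((u:M))] := by
  rw [orderOf_units, ← Units.val_pow_eq_pow_val, ← Units.val_pow_eq_pow_val, ← Units.ext_iff]
  exact pow_eq_pow_iff_modEq

private lemma edge_iff (m : ℕ) (x w : ZMod (p^m)) :
    (∃ y : ℕ, (y : ZMod (p^m)) = x ∧ (q : ZMod (p^m)) ^ y = w)
      ↔ ∃ t : ℕ, (q : ZMod (p^m)) ^ (x.val + p^m * t) = w := by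
  constructor
  · rintro ⟨y, hy, hw⟩
    refine ⟨y / p^m, ?_⟩
    have hval : x.val = y % p^m := by rw [← hy, ZMod.val_natCast]
    rw [hval, Nat.mod_add_div y (p^m)]
    exact hw
  · rintro ⟨t, hw⟩
    refine ⟨x.val + p^m * t, ?_, hw⟩
    rw [Nat.cast_add, Nat.cast_mul, ZMod.natCast_self, zero_mul, add_zero]
    simp [ZMod.natCast_val, ZMod.cast_id]

private lemma ord_q_dvd (hq : IsCoprime q (p:ℤ)) (m : ℕ) :
    orderOf ((q : ZMod (p^(m+1)))) ∣ p^m * (p-1) := by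
  obtain ⟨u, hu⟩ := isUnit_q p q hq (m+1)
  rw [← hu, orderOf_units]
  have h1 : orderOf u ∣ Fintype.card (ZMod (p^(m+1)))ˣ := orderOf_dvd_card
  rwa [ZMod.card_units_eq_totient, Nat.totient_prime_pow hp.out (Nat.succ_pos m),
    Nat.succ_sub_one] at h1

private lemma ord_q_dvd' (hq : IsCoprime q (p:ℤ)) (m : ℕ) :
    orderOf ((q : ZMod (p^m))) ∣ p^m * (p-1) := by
  cases m with
  | zero =>
      haveI : Subsingleton (ZMod (p ^ 0)) := by
        rw [pow_zero]; exact inferInstanceAs (Subsingleton (ZMod 1))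
      have : orderOf ((q : ZMod (p^0))) = 1 :=
        orderOf_eq_one_iff.mpr (Subsingleton.elim _ _)
      rw [this]; exact one_dvd _
  | succ m =>
      exact (ord_q_dvd p q hq m).trans
        (mul_dvd_mul_right (pow_dvd_pow p (Nat.le_succ m)) _)

private lemma d_dvd_pred (hq : IsCoprime q (p:ℤ)) (m : ℕ) :
    orderOf (((q : ZMod (p^m)))^(p^m)) ∣ p - 1 := by
  apply orderOf_dvd_of_pow_eq_one
  rw [← pow_mul]
  exact orderOf_dvd_iff_pow_eq_one.mp (ord_q_dvd' p q hq m)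

private lemma p_not_dvd_d (hq : IsCoprime q (p:ℤ)) (m : ℕ) :
    ¬ p ∣ orderOf (((q : ZMod (p^m)))^(p^m)) := by
  intro h
  have h2 := h.trans (d_dvd_pred p q hq m)
  have h3 := hp.out.two_le
  have h4 : 0 < p - 1 := by omega
  have := Nat.le_of_dvd h4 h2
  omega

private lemma ord_pow_succ (hq : IsCoprime q (p:ℤ)) (m : ℕ) :
    orderOf (((q : ZMod (p^m)))^(p^(m+1))) = orderOf (((q : ZMod (p^m)))^(p^m)) := by
  obtain ⟨u, hu⟩ := isUnit_q p q hq m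
  have hcop : (orderOf (((q : ZMod (p^m)))^(p^m))).Coprime p :=
    (Nat.Prime.coprime_iff_not_dvd hp.out).mpr (p_not_dvd_d p q hq m) |>.symm
  rw [← hu, ← Units.val_pow_eq_pow_val, ← Units.val_pow_eq_pow_val,
    orderOf_units, orderOf_units] at *
  rw [pow_succ, pow_mul, orderOf_pow]
  rw [Nat.Coprime.gcd_eq_one hcop, Nat.div_one]

private lemma trace_pow_mul_comm {α β : Type*} [Fintype α] [Fintype β]
    [DecidableEq α] [DecidableEq β]
    (U : Matrix α β ℤ) (V : Matrix β α ℤ) (j : ℕ) :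
    Matrix.trace ((U * V) ^ (j+1)) = Matrix.trace ((V * U) ^ (j+1)) := by
  have key : ∀ i : ℕ, (U * V) ^ (i+1) = U * ((V * U) ^ i * V) := by
    intro i
    induction i with
    | zero => simp [pow_succ]
    | succ i ih =>
        rw [pow_succ, ih, pow_succ]
        simp only [Matrix.mul_assoc]
  rw [key j, Matrix.trace_mul_comm, pow_succ, Matrix.mul_assoc]

end Aux
section Step

variable (p : ℕ) [hp : Fact p.Prime] (q : ℤ)

/-- One-step reduction: trace at level `n+1` in terms of level `n`. -/
private lemma step (hq : IsCoprime q (p:ℤ)) (j n : ℕ)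
    (ih : Matrix.trace ((expAdj p n q) ^ (j+1))
      ≤ ((orderOf (((q : ZMod (p^n)))^(p^n)) : ℤ)) ^ (j+1)) :
    Matrix.trace ((expAdj p (n+1) q) ^ (j+1))
      ≤ ((orderOf (((q : ZMod (p^(n+1))))^(p^(n+1))) : ℤ)) ^ (j+1) := by
  have hp2 := hp.out.two_le
  have hdvd : p^n ∣ p^(n+1) := pow_dvd_pow p (Nat.le_succ n)
  have hNN : p^n ≤ p^(n+1) := Nat.pow_le_pow_right (by omega) (Nat.le_succ n)
  have hcpp : Nat.Coprime p (p-1) := by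
    have h : p - 1 + 1 = p := by omega
    rw [← h]
    simp
  obtain ⟨u, hu⟩ := isUnit_q p q hq (n+1)
  obtain ⟨u', hu'⟩ := isUnit_q p q hq n
  set ψ : ZMod (p^(n+1)) →+* ZMod (p^n) := ZMod.castHom hdvd (ZMod (p^n)) with hψdef
  -- shifting the base exponent by something ≡ 0 mod p^n keeps reachability
  have F1 : ∀ v1 v2 : ℕ, v1 % p^n = v2 % p^n → ∀ w : ZMod (p^(n+1)),
      (∃ t:ℕ, (q : ZMod (p^(n+1)))^(v1 + p^(n+1)*t) = w) →
      (∃ t:ℕ, (q : ZMod (p^(n+1)))^(v2 + p^(n+1)*t) = w) := by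
    rintro v1 v2 hv w ⟨t1, rfl⟩
    have hv' : v2 ≡ v1 [MOD p^n] := hv.symm
    have hdint : ((p:ℤ))^n ∣ ((v1:ℤ) + (p:ℤ)^(n+1)*(t1:ℤ) - (v2:ℤ)) := by
      have h1 : ((p^n:ℕ):ℤ) ∣ (v1:ℤ) - (v2:ℤ) := (Nat.modEq_iff_dvd).mp hv'
      push_cast at h1
      have h2 : ((p:ℤ))^n ∣ (p:ℤ)^(n+1)*(t1:ℤ) :=
        Dvd.dvd.mul_right (pow_dvd_pow _ (Nat.le_succ n)) _
      have := dvd_add h1 h2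
      convert this using 1
      · rfl
      ring
    obtain ⟨T, hT⟩ := solve_cong p n (p-1) (orderOf ((q : ZMod (p^(n+1))))) hp.out
      (ord_q_dvd p q hq n) hcpp _ hdint
    refine ⟨T, ?_⟩
    have hiff := unit_pow_eq_pow_iff u (v2 + p^(n+1)*T) (v1 + p^(n+1)*t1)
    rw [hu] at hiff
    apply hiff.mpr
    rw [Nat.modEq_iff_dvd]
    have hdvdT := hT.dvd
    have harith : ((v1 + p^(n+1)*t1 : ℕ):ℤ) - ((v2 + p^(n+1)*T : ℕ):ℤ)
        = ((v1:ℤ) + (p:ℤ)^(n+1)*(t1:ℤ) - (v2:ℤ)) - (p:ℤ)^(n+1)*(T:ℤ) := by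
      push_cast; ring
    rw [harith]
    exact_mod_cast hdvdT
  -- edge relation only depends on the class mod p^n
  have F2 : ∀ (x w : ZMod (p^(n+1))),
      expAdj p (n+1) q x w = expAdj p (n+1) q (((ψ x).val : ZMod (p^(n+1)))) w := by
    intro x w
    have hψx : ψ x = ((x.val : ℕ) : ZMod (p^n)) := by
      conv_lhs => rw [show x = ((x.val:ℕ) : ZMod (p^(n+1))) by
        simp [ZMod.natCast_val, ZMod.cast_id]]
      rw [map_natCast]
    have h1 : (ψ x).val = x.val % p^n := by rw [hψx, ZMod.val_natCast]
    have h2 : (ZMod.val (((ψ x).val : ℕ) : ZMod (p^(n+1)))) = x.val % p^n := by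
      rw [ZMod.val_cast_of_lt (lt_of_lt_of_le (ZMod.val_lt (ψ x)) hNN), h1]
    show (if _ then (1:ℤ) else 0) = (if _ then (1:ℤ) else 0)
    apply if_congr _ rfl rfl
    rw [edge_iff, edge_iff, h2]
    constructor
    · exact F1 x.val (x.val % p^n) (Nat.mod_mod_of_dvd x.val dvd_rfl).symm w
    · exact F1 (x.val % p^n) x.val (Nat.mod_mod_of_dvd x.val dvd_rfl) w

  -- abbreviations for the two orders
  have hDu : orderOf (((q : ZMod (p^(n+1))))^(p^(n+1))) = orderOf (u^(p^(n+1))) := by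
    rw [← hu, ← Units.val_pow_eq_pow_val, orderOf_units]
  have hDpos : 0 < orderOf (((q : ZMod (p^(n+1))))^(p^(n+1))) := by
    rw [hDu]; exact orderOf_pos _
  have hdu : orderOf (((q : ZMod (p^n)))^(p^n)) = orderOf (u'^(p^n)) := by
    rw [← hu', ← Units.val_pow_eq_pow_val, orderOf_units]
  have hdpos : 0 < orderOf (((q : ZMod (p^n)))^(p^n)) := by
    rw [hdu]; exact orderOf_pos _
  have hpsig : ψ (((q : ZMod (p^(n+1))))^(p^(n+1))) = ((q : ZMod (p^n)))^(p^(n+1)) := by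
    rw [map_pow, map_intCast]
  have hddvD : orderOf (((q : ZMod (p^n)))^(p^n)) ∣ orderOf (((q : ZMod (p^(n+1))))^(p^(n+1))) := by
    rw [← ord_pow_succ p q hq n]
    apply orderOf_dvd_of_pow_eq_one
    rw [← hpsig, ← map_pow, pow_orderOf_eq_one, map_one]
  have hcv : ∀ c : ZMod (p^n), (ZMod.val (((c.val:ℕ) : ZMod (p^(n+1))))) = c.val :=
    fun c => ZMod.val_cast_of_lt (lt_of_lt_of_le (ZMod.val_lt c) hNN)
  have hcc : ∀ c : ZMod (p^n), (((c.val:ℕ)) : ZMod (p^n)) = c := fun c => by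
    simp [ZMod.natCast_val, ZMod.cast_id]
  -- the rectangular factors
  set U : Matrix (ZMod (p^(n+1))) (ZMod (p^n)) ℤ :=
    Matrix.of (fun x c => if ψ x = c then (1:ℤ) else 0) with hUdef
  set V : Matrix (ZMod (p^n)) (ZMod (p^(n+1))) ℤ :=
    Matrix.of (fun c w => expAdj p (n+1) q (((c.val:ℕ) : ZMod (p^(n+1)))) w) with hVdef
  have claimA : expAdj p (n+1) q = U * V := by
    ext x w
    rw [Matrix.mul_apply]
    have hterm : ∀ c : ZMod (p^n), U x c * V c w = if ψ x = c then V c w else 0 := by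
      intro c
      simp only [hUdef, Matrix.of_apply]
      split_ifs <;> simp
    rw [Finset.sum_congr rfl (fun c _ => hterm c),
      Finset.sum_ite_eq Finset.univ (ψ x) (fun c => V c w)]
    simp only [Finset.mem_univ, if_true]
    simp only [hVdef, Matrix.of_apply]
    exact F2 x w
  have claimB : V * U
      = ((orderOf (((q : ZMod (p^(n+1))))^(p^(n+1))) / orderOf (((q : ZMod (p^n)))^(p^n)) : ℕ) : ℤ)
        • expAdj p n q := by
    ext c c'
    rw [Matrix.mul_apply, Matrix.smul_apply, smul_eq_mul]
    have hVc : ∀ w, V c w =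
        if (∃ t:ℕ, (q : ZMod (p^(n+1)))^(c.val + p^(n+1)*t) = w) then (1:ℤ) else 0 := by
      intro w
      simp only [hVdef, Matrix.of_apply]
      show (if _ then (1:ℤ) else 0) = _
      apply if_congr _ rfl rfl
      have h := edge_iff p q (n+1) (((c.val:ℕ) : ZMod (p^(n+1)))) w
      rw [hcv c] at h
      exact h
    have hterm : ∀ w, V c w * U w c' =
        if ((∃ t:ℕ, (q : ZMod (p^(n+1)))^(c.val + p^(n+1)*t) = w) ∧ ψ w = c')
          then (1:ℤ) else 0 := by
      intro w
      rw [hVc w]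
      simp only [hUdef, Matrix.of_apply]
      by_cases h1 : (∃ t:ℕ, (q : ZMod (p^(n+1)))^(c.val + p^(n+1)*t) = w) <;>
        by_cases h2 : ψ w = c' <;> simp [h1, h2]
    rw [Finset.sum_congr rfl (fun w _ => hterm w), Finset.sum_boole]
    by_cases hedge : ∃ y:ℕ, (y : ZMod (p^n)) = c ∧ (q : ZMod (p^n))^y = c'
    · -- an edge exists at level n
      obtain ⟨y, hy, hyc⟩ := hedge
      have hA1 : expAdj p n q c c' = 1 := by
        simp only [expAdj]
        exact if_pos ⟨y, hy, hyc⟩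
      rw [hA1, mul_one]
      have hyint : ((p:ℤ))^n ∣ ((y:ℤ) - (c.val:ℤ)) := by
        have h1 : (y : ZMod (p^n)) = ((c.val:ℕ) : ZMod (p^n)) := by rw [hcc c]; exact hy
        have h2 : y ≡ c.val [MOD p^n] := (ZMod.natCast_eq_natCast_iff _ _ _).mp h1
        have h3 := (Nat.modEq_iff_dvd).mp h2
        push_cast at h3
        have h4 := dvd_neg.mpr h3
        convert h4 using 1; · rfl
        ring
      obtain ⟨T, hT⟩ := solve_cong p n (p-1) (orderOf ((q : ZMod (p^n)))) hp.out
        (ord_q_dvd' p q hq n) hcpp _ hyint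
      have ht0 : (c.val + p^(n+1)*T) ≡ y [MOD orderOf ((q : ZMod (p^n)))] := by
        rw [Nat.modEq_iff_dvd]
        have h2 := hT.dvd
        have harith : ((y:ℕ):ℤ) - ((c.val + p^(n+1)*T : ℕ):ℤ)
            = ((y:ℤ) - (c.val:ℤ)) - (p:ℤ)^(n+1)*(T:ℤ) := by push_cast; ring
        rw [harith]
        exact h2
      have ht0' : (q : ZMod (p^n))^(c.val + p^(n+1)*T) = c' := by
        rw [← hyc]
        have hiff := unit_pow_eq_pow_iff u' (c.val + p^(n+1)*T) y
        rw [hu'] at hiff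
        exact hiff.mpr ht0
      have hpowsplit : ∀ t:ℕ, (q : ZMod (p^(n+1)))^(c.val + p^(n+1)*t)
          = (q : ZMod (p^(n+1)))^(c.val) * (((q : ZMod (p^(n+1))))^(p^(n+1)))^t := by
        intro t
        rw [pow_add ((q : ZMod (p^(n+1)))) (c.val) (p^(n+1)*t),
          pow_mul ((q : ZMod (p^(n+1)))) (p^(n+1)) t]
      have himg : (Finset.univ.filter (fun w : ZMod (p^(n+1)) =>
            (∃ t:ℕ, (q : ZMod (p^(n+1)))^(c.val + p^(n+1)*t) = w) ∧ ψ w = c'))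
          = ((Finset.range (orderOf (((q : ZMod (p^(n+1))))^(p^(n+1))))).filter
              (fun t => ψ ((q : ZMod (p^(n+1)))^(c.val + p^(n+1)*t)) = c')).image
              (fun t => (q : ZMod (p^(n+1)))^(c.val + p^(n+1)*t)) := by
        ext w
        simp only [Finset.mem_filter, Finset.mem_image, Finset.mem_univ, true_and,
          Finset.mem_range]
        constructor
        · rintro ⟨⟨t, rfl⟩, hw⟩
          have heqw : (q : ZMod (p^(n+1)))^(c.val +
                p^(n+1)*(t % orderOf (((q : ZMod (p^(n+1))))^(p^(n+1)))))
              = (q : ZMod (p^(n+1)))^(c.val + p^(n+1)*t) := by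
            rw [hpowsplit, hpowsplit, pow_mod_orderOf]
          exact ⟨t % orderOf (((q : ZMod (p^(n+1))))^(p^(n+1))),
            ⟨Nat.mod_lt _ hDpos, by rw [heqw]; exact hw⟩, heqw⟩
        · rintro ⟨t, ⟨ht, hψt⟩, rfl⟩
          exact ⟨⟨t, rfl⟩, hψt⟩
      have hinj : Set.InjOn (fun t => (q : ZMod (p^(n+1)))^(c.val + p^(n+1)*t))
          ((Finset.range (orderOf (((q : ZMod (p^(n+1))))^(p^(n+1))))).filter
              (fun t => ψ ((q : ZMod (p^(n+1)))^(c.val + p^(n+1)*t)) = c')) := by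
        intro t1 h1 t2 h2 heq
        simp only [Finset.coe_filter, Set.mem_setOf_eq, Finset.mem_range] at h1 h2
        simp only at heq
        rw [hpowsplit, hpowsplit] at heq
        have hequ : u^(c.val) * (u^(p^(n+1)))^t1 = u^(c.val) * (u^(p^(n+1)))^t2 := by
          apply Units.ext
          simpa [Units.val_mul, Units.val_pow_eq_pow_val, hu] using heq
        have hcancel := mul_left_cancel hequ
        have hmod := pow_eq_pow_iff_modEq.mp hcancel
        rw [← hDu] at hmod
        have : t1 % orderOf (((q : ZMod (p^(n+1))))^(p^(n+1)))
            = t2 % orderOf (((q : ZMod (p^(n+1))))^(p^(n+1))) := hmod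
        rw [Nat.mod_eq_of_lt h1.1, Nat.mod_eq_of_lt h2.1] at this
        exact this
      have hfc : ((Finset.range (orderOf (((q : ZMod (p^(n+1))))^(p^(n+1))))).filter
              (fun t => ψ ((q : ZMod (p^(n+1)))^(c.val + p^(n+1)*t)) = c'))
          = ((Finset.range (orderOf (((q : ZMod (p^(n+1))))^(p^(n+1))))).filter
              (fun t => t % orderOf (((q : ZMod (p^n)))^(p^n))
                = T % orderOf (((q : ZMod (p^n)))^(p^n)))) := by
        apply Finset.filter_congr
        intro t _
        rw [show ψ ((q : ZMod (p^(n+1)))^(c.val + p^(n+1)*t))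
            = (q : ZMod (p^n))^(c.val + p^(n+1)*t) by rw [map_pow, map_intCast]]
        rw [← ht0']
        have hiff1 := unit_pow_eq_pow_iff u' (c.val + p^(n+1)*t) (c.val + p^(n+1)*T)
        rw [hu'] at hiff1
        rw [hiff1]
        have hiff2 := unit_pow_eq_pow_iff u' (p^(n+1)*t) (p^(n+1)*T)
        rw [hu'] at hiff2
        have hval : ((u'^(p^(n+1)) : (ZMod (p^n))ˣ) : ZMod (p^n))
            = (q : ZMod (p^n))^(p^(n+1)) := by
          rw [Units.val_pow_eq_pow_val, hu']
        have hiff3 := unit_pow_eq_pow_iff (u'^(p^(n+1))) t T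
        rw [hval, ord_pow_succ p q hq n] at hiff3
        constructor
        · intro h
          have h2 := Nat.ModEq.add_left_cancel' _ h
          have h3 := hiff2.mpr h2
          rw [pow_mul, pow_mul] at h3
          exact hiff3.mp h3
        · intro h
          have h3 := hiff3.mpr h
          rw [← pow_mul, ← pow_mul] at h3
          have h2 := hiff2.mp h3
          exact Nat.ModEq.add_left _ h2
      rw [himg, Finset.card_image_of_injOn hinj, hfc, card_filter_mod hdpos hddvD T]
    · -- no edge at level n
      have hA0 : expAdj p n q c c' = 0 := by
        simp only [expAdj]
        exact if_neg hedge
      rw [hA0, mul_zero]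
      norm_cast
      rw [Finset.card_eq_zero, Finset.filter_eq_empty_iff]
      rintro w -
      rintro ⟨⟨t, rfl⟩, hw⟩
      apply hedge
      refine ⟨c.val + p^(n+1)*t, ?_, ?_⟩
      · rw [Nat.cast_add, Nat.cast_mul,
          show ((p^(n+1) : ℕ) : ZMod (p^n)) = 0 from
            (ZMod.natCast_eq_zero_iff _ _).mpr hdvd,
          zero_mul, add_zero, hcc c]
      · rw [← hw, Int.cast_pow, map_pow, map_intCast]
  calc Matrix.trace ((expAdj p (n+1) q) ^ (j+1))
      = Matrix.trace ((U * V) ^ (j+1)) := by rw [← claimA]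
    _ = Matrix.trace ((V * U) ^ (j+1)) := trace_pow_mul_comm U V j
    _ = Matrix.trace ((((orderOf (((q : ZMod (p^(n+1))))^(p^(n+1)))
          / orderOf (((q : ZMod (p^n)))^(p^n)) : ℕ) : ℤ) • expAdj p n q) ^ (j+1)) := by
        rw [claimB]
    _ = ((orderOf (((q : ZMod (p^(n+1))))^(p^(n+1)))
          / orderOf (((q : ZMod (p^n)))^(p^n)) : ℕ) : ℤ)^(j+1)
        * Matrix.trace ((expAdj p n q) ^ (j+1)) := by
        rw [smul_pow, Matrix.trace_smul, smul_eq_mul]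
    _ ≤ ((orderOf (((q : ZMod (p^(n+1))))^(p^(n+1)))
          / orderOf (((q : ZMod (p^n)))^(p^n)) : ℕ) : ℤ)^(j+1)
        * ((orderOf (((q : ZMod (p^n)))^(p^n)) : ℤ)) ^ (j+1) :=
        mul_le_mul_of_nonneg_left ih (pow_nonneg (Int.natCast_nonneg _) _)
    _ = ((orderOf (((q : ZMod (p^(n+1))))^(p^(n+1))) : ℤ)) ^ (j+1) := by
        rw [← mul_pow]
        congr 1
        rw [← Nat.cast_mul]
        exact_mod_cast congrArg (fun z : ℕ => (z:ℤ)) (Nat.div_mul_cancel hddvD)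

end Step
theorem trace_pow_expAdj_le (p n k : ℕ) (q : ℤ) [Fact p.Prime]
    (hn : 0 < n) (hk : 0 < k) (hq : IsCoprime q (p : ℤ)) :
    Matrix.trace ((expAdj p n q) ^ k) ≤ ((p : ℤ) - 1) ^ k := by
  obtain ⟨j, rfl⟩ : ∃ j, k = j + 1 := ⟨k - 1, by omega⟩
  have main : ∀ m : ℕ, Matrix.trace ((expAdj p m q) ^ (j+1))
      ≤ ((orderOf (((q : ZMod (p^m)))^(p^m)) : ℤ)) ^ (j+1) := by
    intro m
    induction m with
    | zero =>
        haveI : Subsingleton (ZMod (p^0)) := by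
          rw [pow_zero]; exact inferInstanceAs (Subsingleton (ZMod 1))
        have hA : expAdj p 0 q = 1 := by
          ext x w
          simp only [expAdj]
          rw [if_pos ⟨0, Subsingleton.elim _ _, Subsingleton.elim _ _⟩,
            Subsingleton.elim x w, Matrix.one_apply_eq]
        have hord : orderOf (((q : ZMod (p^0)))^(p^0)) = 1 :=
          orderOf_eq_one_iff.mpr (Subsingleton.elim _ _)
        rw [hA, one_pow, Matrix.trace_one, hord]
        simp [ZMod.card]
    | succ m ih => exact step p q hq j m ih
  refine (main n).trans ?_
  have hdvd := d_dvd_pred p q hq n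
  have h2 := (Fact.out : p.Prime).two_le
  have hle : orderOf (((q : ZMod (p^n)))^(p^n)) ≤ p - 1 := Nat.le_of_dvd (by omega) hdvd
  have hcast : ((orderOf (((q : ZMod (p^n)))^(p^n)) : ℕ) : ℤ) ≤ ((p:ℤ) - 1) := by omega
  exact pow_le_pow_left₀ (Int.natCast_nonneg _) hcast _
end

section
/- Let p be a prime, n a positive integer, q an integer coprime to p that is a primitive root modulo p, and k a positive integer. Then the number of k-cycles with a marked initial vertex in the exponentiation graph Γ_{p,n,q} (equivalently, the trace of the k-th power of its adjacency matrix) is exactly (p-1)^k. -/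
open Classical

namespace ExpAdjAux

lemma isUnit_pow_eq_iff {M : Type*} [Monoid M] {x : M} (hx : IsUnit x) (s t : ℕ) :
    x ^ s = x ^ t ↔ s ≡ t [MOD orderOf x] := by
  obtain ⟨u, rfl⟩ := hx
  rw [orderOf_units]
  constructor
  · intro h
    exact pow_eq_pow_iff_modEq.mp (Units.ext (by simpa using h))
  · intro h
    have h2 : u ^ s = u ^ t := pow_eq_pow_iff_modEq.mpr h
    simpa using congrArg Units.val h2

variable {p : ℕ} [hp : Fact p.Prime] {q : ℤ}

lemma neZero_ppow (m : ℕ) : NeZero (p ^ m) := ⟨pow_ne_zero _ hp.out.ne_zero⟩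

lemma pow_split {M : Type*} [Monoid M] (x : M) (a b c : ℕ) :
    x ^ (a + b * c) = x ^ a * (x ^ c) ^ b := by
  rw [pow_add, mul_comm b c, pow_mul]

lemma isUnit_q (hq : IsCoprime q (p : ℤ)) (m : ℕ) : IsUnit (q : ZMod (p ^ m)) := by
  obtain ⟨a, b, hab⟩ := hq.pow_right (n := m)
  apply IsUnit.of_mul_eq_one ((a : ZMod (p ^ m)))
  have h := congrArg (fun z : ℤ => (z : ZMod (p ^ m))) hab
  push_cast at h
  rw [show ((p : ZMod (p ^ m)) : ZMod (p ^ m)) ^ m = 0 by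
    rw [← Nat.cast_pow, ZMod.natCast_self]] at h
  rw [mul_zero, add_zero] at h
  rw [mul_comm] at h
  exact h

lemma orderOf_q_modp (hq : IsCoprime q (p : ℤ))
    (hprim : ∀ u : (ZMod p)ˣ, ∃ m : ℕ, (q : ZMod p) ^ m = (u : ZMod p)) :
    orderOf ((q : ZMod p)) = p - 1 := by
  have hq0 : (q : ZMod p) ≠ 0 := by
    intro h
    rw [ZMod.intCast_zmod_eq_zero_iff_dvd] at h
    have := (hq.symm.isUnit_of_dvd' dvd_rfl h)
    have h2 := Int.isUnit_iff.mp this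
    have := hp.out.two_le
    omega
  set uq : (ZMod p)ˣ := Units.mk0 _ hq0 with huq
  have hcoe : (uq : ZMod p) = (q : ZMod p) := rfl
  have hall : ∀ u : (ZMod p)ˣ, u ∈ Subgroup.zpowers uq := by
    intro u
    obtain ⟨m, hm⟩ := hprim u
    refine ⟨(m : ℤ), ?_⟩
    show uq ^ (m : ℤ) = u
    rw [zpow_natCast]
    ext
    rw [Units.val_pow_eq_pow_val, hcoe, hm]
  have h1 : orderOf uq = Nat.card (ZMod p)ˣ :=
    orderOf_eq_card_of_forall_mem_zpowers hall
  rw [← hcoe, orderOf_units, h1, Nat.card_eq_fintype_card, ZMod.card_units_eq_totient,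
    Nat.totient_prime hp.out]

lemma euler_q (hq : IsCoprime q (p : ℤ)) (m : ℕ) :
    (q : ZMod (p ^ m)) ^ (p ^ m).totient = 1 := by
  obtain ⟨u, hu⟩ := isUnit_q hq m
  have h := ZMod.pow_totient u
  calc (q : ZMod (p ^ m)) ^ (p ^ m).totient = ((u ^ (p ^ m).totient : (ZMod (p ^ m))ˣ) : ZMod (p ^ m)) := by
        rw [Units.val_pow_eq_pow_val, hu]
    _ = 1 := by rw [h, Units.val_one]

lemma ord_aux (hq : IsCoprime q (p : ℤ))
    (hprim : ∀ u : (ZMod p)ˣ, ∃ m : ℕ, (q : ZMod p) ^ m = (u : ZMod p))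
    (m e : ℕ) (hm : 1 ≤ m) (he : m - 1 ≤ e) :
    orderOf ((q : ZMod (p ^ m)) ^ p ^ e) = p - 1 := by
  haveI := neZero_ppow (p := p) m
  set Q : ZMod (p ^ m) := (q : ZMod (p ^ m)) with hQ
  have htot : (p ^ m).totient = p ^ (m - 1) * (p - 1) := Nat.totient_prime_pow hp.out hm
  have hpow1 : (Q ^ p ^ e) ^ (p - 1) = 1 := by
    have h1 : p ^ (m - 1) * p ^ (e - (m - 1)) = p ^ e := by
      rw [← pow_add]; congr 1; omega
    have hexp : p ^ e * (p - 1) = (p ^ m).totient * p ^ (e - (m - 1)) := by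
      rw [htot, ← h1]; ring
    rw [← pow_mul, hexp, pow_mul, euler_q hq m, one_pow]
  have hdvd1 : orderOf (Q ^ p ^ e) ∣ p - 1 := orderOf_dvd_of_pow_eq_one hpow1
  -- lower bound via reduction mod p
  have hb : orderOf ((q : ZMod p)) = p - 1 := orderOf_q_modp hq hprim
  have hb1 : (q : ZMod p) ^ (p - 1) = 1 := by rw [← hb]; exact pow_orderOf_eq_one _
  have h2 : orderOf ((q : ZMod p) ^ p ^ e) = p - 1 := by
    have hd1 : orderOf ((q : ZMod p) ^ p ^ e) ∣ p - 1 := by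
      apply orderOf_dvd_of_pow_eq_one
      rw [← pow_mul, mul_comm, pow_mul, hb1, one_pow]
    have hd2 : p - 1 ∣ orderOf ((q : ZMod p) ^ p ^ e) := by
      have h3 : (q : ZMod p) ^ (p ^ e * orderOf ((q : ZMod p) ^ p ^ e)) = 1 := by
        rw [pow_mul]; exact pow_orderOf_eq_one _
      have h4 : p - 1 ∣ p ^ e * orderOf ((q : ZMod p) ^ p ^ e) := by
        rw [← hb]; exact orderOf_dvd_of_pow_eq_one h3
      have hc0 : Nat.Coprime p (p - 1) := by
        have h := Nat.coprime_add_self_left.mpr (Nat.coprime_one_left (p - 1))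
        rwa [show 1 + (p - 1) = p by have := hp.out.two_le; omega] at h
      have hc : Nat.Coprime (p - 1) (p ^ e) := (Nat.Coprime.pow_left e hc0).symm
      exact hc.dvd_of_dvd_mul_left h4
    exact Nat.dvd_antisymm hd1 hd2
  have hπ : ((ZMod.castHom (dvd_pow_self p (by omega : m ≠ 0)) (ZMod p)) (Q ^ p ^ e)) =
      (q : ZMod p) ^ p ^ e := by
    rw [map_pow, hQ, map_intCast]
  have h4 : orderOf ((q : ZMod p) ^ p ^ e) ∣ orderOf (Q ^ p ^ e) := by
    apply orderOf_dvd_of_pow_eq_one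
    rw [← hπ, ← map_pow, pow_orderOf_eq_one, map_one]
  exact Nat.dvd_antisymm hdvd1 (by rw [← h2]; exact h4)

lemma edge_iff (m : ℕ) (x w : ZMod (p ^ m)) :
    (∃ y : ℕ, (y : ZMod (p ^ m)) = x ∧ (q : ZMod (p ^ m)) ^ y = w) ↔
      ∃ t : ℕ, (q : ZMod (p ^ m)) ^ (x.val + t * p ^ m) = w := by
  haveI := neZero_ppow (p := p) m
  constructor
  · rintro ⟨y, hy, rfl⟩
    have h1 : y % p ^ m = x.val := by rw [← ZMod.val_natCast, hy]
    refine ⟨y / p ^ m, ?_⟩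
    congr 1
    rw [mul_comm, ← h1]
    exact Nat.mod_add_div y (p ^ m)
  · rintro ⟨t, rfl⟩
    refine ⟨x.val + t * p ^ m, ?_, rfl⟩
    rw [Nat.cast_add, Nat.cast_mul, ZMod.natCast_self, mul_zero, add_zero,
      ZMod.natCast_zmod_val]

lemma core1 (hq : IsCoprime q (p : ℤ)) (m : ℕ) (x w : ZMod (p ^ (m + 1))) :
    (∃ t : ℕ, (q : ZMod (p ^ (m + 1))) ^ (x.val + t * p ^ (m + 1)) = w) ↔
      ∃ t : ℕ, (q : ZMod (p ^ (m + 1))) ^ (x.val % p ^ m + t * p ^ m) = w := by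
  obtain ⟨e, hpe⟩ : ∃ e, p = e + 2 := ⟨p - 2, by have := hp.out.two_le; omega⟩
  have hQD : (q : ZMod (p ^ (m + 1))) ^ (p ^ m * (p - 1)) = 1 := by
    have h1 : p ^ m * (p - 1) = (p ^ (m + 1)).totient := by
      rw [Nat.totient_prime_pow hp.out (Nat.succ_pos m), Nat.succ_sub_one]
    rw [h1, euler_q hq]
  obtain ⟨a, c, h1, h2⟩ : ∃ a c, x.val % p ^ m = a ∧ x.val = a + p ^ m * c :=
    ⟨x.val % p ^ m, x.val / p ^ m, rfl, (Nat.mod_add_div _ _).symm⟩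
  constructor
  · rintro ⟨t, rfl⟩
    refine ⟨c + t * p, ?_⟩
    have hexp : x.val % p ^ m + (c + t * p) * p ^ m = x.val + t * p ^ (m + 1) := by
      rw [h1, h2, pow_succ]
      ring
    rw [hexp]
  · rintro ⟨t, rfl⟩
    refine ⟨t + c * (p - 2), ?_⟩
    have key : x.val + (t + c * (p - 2)) * p ^ (m + 1) =
        (x.val % p ^ m + t * p ^ m) + (p ^ m * (p - 1)) * (t + c * (p - 1)) := by
      rw [h1, h2, pow_succ, hpe]
      rw [show e + 2 - 1 = e + 1 by omega, show e + 2 - 2 = e by omega]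
      ring
    rw [key]
    rw [pow_add ((q : ZMod (p ^ (m + 1)))) (x.val % p ^ m + t * p ^ m) (p ^ m * (p - 1) * (t + c * (p - 1)))]
    rw [pow_mul, hQD, one_pow, mul_one]

lemma trace_cycle {α β : Type*} [Fintype α] [Fintype β] [DecidableEq α] [DecidableEq β]
    (M : Matrix α β ℤ) (N : Matrix β α ℤ) {k : ℕ} (hk : 0 < k) :
    Matrix.trace ((M * N) ^ k) = Matrix.trace ((N * M) ^ k) := by
  obtain ⟨j, rfl⟩ : ∃ j, k = j + 1 := ⟨k - 1, by omega⟩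
  have haux : ∀ i : ℕ, N * (M * N) ^ i = (N * M) ^ i * N := by
    intro i
    induction i with
    | zero => simp
    | succ i ih =>
        rw [pow_succ, pow_succ, ← Matrix.mul_assoc, ih, Matrix.mul_assoc, Matrix.mul_assoc,
          ← Matrix.mul_assoc N M N]
  rw [pow_succ' (M * N) j, Matrix.mul_assoc, haux, Matrix.trace_mul_comm,
    Matrix.mul_assoc, ← pow_succ (N * M) j]

lemma step (hq : IsCoprime q (p : ℤ))
    (hprim : ∀ u : (ZMod p)ˣ, ∃ m : ℕ, (q : ZMod p) ^ m = (u : ZMod p))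
    (m : ℕ) (hm : 1 ≤ m) {k : ℕ} (hk : 0 < k) :
    Matrix.trace (expAdj p (m + 1) q ^ k) = Matrix.trace (expAdj p m q ^ k) := by
  haveI := neZero_ppow (p := p) m
  haveI := neZero_ppow (p := p) (m + 1)
  obtain ⟨r, hr⟩ : ∃ r : ZMod (p ^ (m + 1)) →+* ZMod (p ^ m),
      r = ZMod.castHom (pow_dvd_pow p (Nat.le_succ m)) (ZMod (p ^ m)) := ⟨_, rfl⟩
  obtain ⟨R, hR⟩ : ∃ R : Matrix (ZMod (p ^ (m + 1))) (ZMod (p ^ m)) ℤ,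
      R = fun x u => if r x = u then 1 else 0 := ⟨_, rfl⟩
  obtain ⟨B, hB⟩ : ∃ B : Matrix (ZMod (p ^ m)) (ZMod (p ^ (m + 1))) ℤ,
      B = fun u w => if ∃ t : ℕ, (q : ZMod (p ^ (m + 1))) ^ (u.val + t * p ^ m) = w
        then 1 else 0 := ⟨_, rfl⟩
  have hrval : ∀ x : ZMod (p ^ (m + 1)), (r x).val = x.val % p ^ m := by
    intro x
    have h1 : r x = ((x.val : ℕ) : ZMod (p ^ m)) := by
      conv_lhs => rw [← ZMod.natCast_zmod_val x]
      rw [hr]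
      exact map_natCast _ x.val
    rw [h1, ZMod.val_natCast]
  have hrq : ∀ e : ℕ, r ((q : ZMod (p ^ (m + 1))) ^ e) = (q : ZMod (p ^ m)) ^ e := by
    intro e; rw [hr, map_pow, map_intCast]
  have hA1 : expAdj p (m + 1) q = R * B := by
    ext x w
    rw [Matrix.mul_apply]
    have hzero : ∀ b ∈ Finset.univ, b ≠ r x → R x b * B b w = 0 := by
      intro b _ hb
      simp only [hR]
      rw [if_neg (fun h => hb h.symm), zero_mul]
    rw [Finset.sum_eq_single (r x) hzero (fun h => absurd (Finset.mem_univ _) h)]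
    simp only [hR, if_pos rfl, one_mul, hB, expAdj]
    refine if_congr ?_ rfl rfl
    rw [hrval x]
    exact (edge_iff (m + 1) x w).trans (core1 hq m x w)
  have hA0 : B * R = expAdj p m q := by
    ext u w
    rw [Matrix.mul_apply]
    simp only [expAdj]
    have hterm : ∀ w' : ZMod (p ^ (m + 1)),
        B u w' * R w' w =
          if ((∃ t : ℕ, (q : ZMod (p ^ (m + 1))) ^ (u.val + t * p ^ m) = w') ∧ r w' = w)
            then 1 else 0 := by
      intro w'
      simp only [hB, hR]
      by_cases h1 : ∃ t : ℕ, (q : ZMod (p ^ (m + 1))) ^ (u.val + t * p ^ m) = w'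
      · by_cases h2 : r w' = w
        · rw [if_pos h1, if_pos h2, if_pos ⟨h1, h2⟩, one_mul]
        · rw [if_pos h1, if_neg h2, mul_zero, eq_comm]
          exact if_neg fun h => h2 h.2
      · rw [if_neg h1, zero_mul, eq_comm]
        exact if_neg fun h => h1 h.1
    rw [Finset.sum_congr rfl fun w' _ => hterm w']
    by_cases h : ∃ t : ℕ, (q : ZMod (p ^ m)) ^ (u.val + t * p ^ m) = w
    · obtain ⟨t₀, ht₀⟩ := h
      have hX0 : orderOf ((q : ZMod (p ^ m)) ^ p ^ m) = p - 1 :=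
        ord_aux hq hprim m m hm (by omega)
      have hX1 : orderOf ((q : ZMod (p ^ (m + 1))) ^ p ^ m) = p - 1 :=
        ord_aux hq hprim (m + 1) m (by omega) (by omega)
      have hzero : ∀ w' ∈ Finset.univ,
          w' ≠ (q : ZMod (p ^ (m + 1))) ^ (u.val + t₀ * p ^ m) →
          (if ((∃ t : ℕ, (q : ZMod (p ^ (m + 1))) ^ (u.val + t * p ^ m) = w') ∧ r w' = w)
            then (1 : ℤ) else 0) = 0 := by
        intro w' _ hne
        rw [if_neg]
        rintro ⟨⟨t, rfl⟩, hrw⟩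
        apply hne
        have h0 : (q : ZMod (p ^ m)) ^ (u.val + t * p ^ m) =
            (q : ZMod (p ^ m)) ^ (u.val + t₀ * p ^ m) :=
          ((hrq _).symm.trans hrw).trans ht₀.symm
        have h0' : ((q : ZMod (p ^ m)) ^ p ^ m) ^ t = ((q : ZMod (p ^ m)) ^ p ^ m) ^ t₀ := by
          rw [pow_split _ u.val t (p ^ m), pow_split _ u.val t₀ (p ^ m)] at h0
          exact ((isUnit_q hq m).pow u.val).mul_right_inj.mp h0
        have hmod : t ≡ t₀ [MOD p - 1] := by
          have h2 := (isUnit_pow_eq_iff ((isUnit_q hq m).pow (p ^ m)) t t₀).mp h0'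
          rwa [hX0] at h2
        have h1' : ((q : ZMod (p ^ (m + 1))) ^ p ^ m) ^ t =
            ((q : ZMod (p ^ (m + 1))) ^ p ^ m) ^ t₀ := by
          apply (isUnit_pow_eq_iff ((isUnit_q hq (m + 1)).pow (p ^ m)) t t₀).mpr
          rwa [hX1]
        rw [pow_split _ u.val t (p ^ m), pow_split _ u.val t₀ (p ^ m), h1']
      rw [Finset.sum_eq_single _ hzero (fun hh => absurd (Finset.mem_univ _) hh)]
      rw [if_pos ⟨⟨t₀, rfl⟩, (hrq _).trans ht₀⟩]
      rw [if_pos ((edge_iff m u w).mpr ⟨t₀, ht₀⟩)]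
    · rw [if_neg (fun hE => h ((edge_iff m u w).mp hE))]
      apply Finset.sum_eq_zero
      intro w' _
      rw [if_neg]
      rintro ⟨⟨t, rfl⟩, hrw⟩
      exact h ⟨t, (hrq _).symm.trans hrw⟩
  rw [hA1, trace_cycle R B hk, hA0]

lemma base_case (hq : IsCoprime q (p : ℤ))
    (hprim : ∀ u : (ZMod p)ˣ, ∃ m : ℕ, (q : ZMod p) ^ m = (u : ZMod p))
    {k : ℕ} (hk : 0 < k) :
    Matrix.trace (expAdj p 1 q ^ k) = ((p : ℤ) - 1) ^ k := by
  haveI := neZero_ppow (p := p) 1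
  have hord : orderOf ((q : ZMod (p ^ 1))) = p - 1 := by
    have h := ord_aux hq hprim 1 0 le_rfl (by omega)
    simpa using h
  have hQ1 : (q : ZMod (p ^ 1)) ^ (p - 1) = 1 := by
    rw [← hord]; exact pow_orderOf_eq_one _
  obtain ⟨e, hpe⟩ : ∃ e, p = e + 2 := ⟨p - 2, by have := hp.out.two_le; omega⟩
  obtain ⟨R, hR⟩ : ∃ R : Matrix (ZMod (p ^ 1)) (Fin 1) ℤ, R = fun _ _ => 1 := ⟨_, rfl⟩
  obtain ⟨B, hB⟩ : ∃ B : Matrix (Fin 1) (ZMod (p ^ 1)) ℤ,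
      B = fun _ w => if ∃ s : ℕ, (q : ZMod (p ^ 1)) ^ s = w then 1 else 0 := ⟨_, rfl⟩
  have hA : expAdj p 1 q = R * B := by
    ext x w
    rw [Matrix.mul_apply, Fin.sum_univ_one]
    simp only [hR, hB, expAdj, one_mul]
    refine if_congr ?_ rfl rfl
    constructor
    · rintro ⟨y, _, hy⟩; exact ⟨y, hy⟩
    · rintro ⟨s, rfl⟩
      refine (edge_iff 1 x _).mpr ⟨s + x.val * (p - 2), ?_⟩
      have key : ∀ v : ℕ, v + (s + v * (p - 2)) * p ^ 1 = s + (p - 1) * (s + v * (p - 1)) := by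
        intro v
        rw [pow_one, hpe]
        rw [show e + 2 - 1 = e + 1 by omega, show e + 2 - 2 = e by omega]
        ring
      rw [key x.val, pow_add, pow_mul, hQ1, one_pow, mul_one]
  have hBR : B * R = ((p : ℤ) - 1) • (1 : Matrix (Fin 1) (Fin 1) ℤ) := by
    ext i j
    have hi : i = 0 := Subsingleton.elim _ _
    have hj : j = 0 := Subsingleton.elim _ _
    subst hi; subst hj
    rw [Matrix.mul_apply, Matrix.smul_apply, Matrix.one_apply_eq, smul_eq_mul, mul_one]
    simp only [hB, hR, mul_one]
    have hmem : ∀ w : ZMod (p ^ 1), (∃ s : ℕ, (q : ZMod (p ^ 1)) ^ s = w) ↔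
        w ∈ Finset.image (fun s : ℕ => (q : ZMod (p ^ 1)) ^ s) (Finset.range (p - 1)) := by
      intro w
      constructor
      · rintro ⟨s, rfl⟩
        refine Finset.mem_image.mpr ⟨s % (p - 1), Finset.mem_range.mpr ?_, ?_⟩
        · exact Nat.mod_lt _ (by have := hp.out.two_le; omega)
        · exact (pow_eq_pow_mod s hQ1).symm
      · intro hw
        obtain ⟨s, _, hs⟩ := Finset.mem_image.mp hw
        exact ⟨s, hs⟩
    rw [Finset.sum_congr rfl fun w _ => if_congr (hmem w) rfl rfl]
    rw [Finset.sum_ite_mem, Finset.univ_inter, Finset.sum_const]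
    have hcard : (Finset.image (fun s : ℕ => (q : ZMod (p ^ 1)) ^ s) (Finset.range (p - 1))).card
        = p - 1 := by
      rw [Finset.card_image_of_injOn, Finset.card_range]
      intro s1 hs1 s2 hs2 hss
      have h2 := (isUnit_pow_eq_iff (isUnit_q hq 1) s1 s2).mp hss
      rw [hord] at h2
      have hl1 := Finset.mem_range.mp (by exact hs1)
      have hl2 := Finset.mem_range.mp (by exact hs2)
      unfold Nat.ModEq at h2
      rwa [Nat.mod_eq_of_lt hl1, Nat.mod_eq_of_lt hl2] at h2
    rw [hcard, nsmul_eq_mul, mul_one, Nat.cast_sub hp.out.one_le, Nat.cast_one]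
  calc Matrix.trace (expAdj p 1 q ^ k) = Matrix.trace ((R * B) ^ k) := by rw [hA]
    _ = Matrix.trace ((B * R) ^ k) := trace_cycle R B hk
    _ = ((p : ℤ) - 1) ^ k := by
        rw [hBR, smul_pow, one_pow, Matrix.trace_smul, Matrix.trace_one]
        simp

end ExpAdjAux

theorem trace_pow_expAdj_eq_of_primitive (p n k : ℕ) (q : ℤ) [Fact p.Prime]
    (hn : 0 < n) (hk : 0 < k) (hq : IsCoprime q (p : ℤ))
    (hprim : ∀ u : (ZMod p)ˣ, ∃ m : ℕ, (q : ZMod p) ^ m = (u : ZMod p)) :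
    Matrix.trace ((expAdj p n q) ^ k) = ((p : ℤ) - 1) ^ k := by
  induction n, hn using Nat.le_induction with
  | base => exact ExpAdjAux.base_case hq hprim hk
  | succ m hm ih => rw [ExpAdjAux.step hq hprim m hm hk]; exact ih
end

section
/- Let p be a prime, n a positive integer, q an integer coprime to p, and k a positive integer. Define f : {0,1,...,p^n-1} → {0,1,...,p^n-1} by f(x) = q^x mod p^n. Then the number of k-periodic points of f (points x with f^[k](x) = x) is at most (p-1)^k. -/
/-- Repeated exponentiation map on `ZMod (p^n)`: `x ↦ q^x mod p^n`, where the exponent is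
the natural-number representative `x.val ∈ {0, ..., p^n - 1}` of `x`. -/
def expMap (p n : ℕ) (q : ℤ) [Fact p.Prime] : ZMod (p ^ n) → ZMod (p ^ n) :=
  fun x => (q : ZMod (p ^ n)) ^ x.val

private lemma isUnit_intCast_zmod (q : ℤ) (N : ℕ) (hq : IsCoprime q (N : ℤ)) :
    IsUnit ((q : ZMod N)) := by
  obtain ⟨u, v, h⟩ := hq
  apply IsUnit.of_mul_eq_one (u : ZMod N)
  have : ((u * q + v * N : ℤ) : ZMod N) = ((1 : ℤ) : ZMod N) := by rw [h]
  push_cast at this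
  simpa [ZMod.natCast_self, mul_comm] using this

/-- Lifting lemma: if `c ≡ 1 [p^m]` with `m ≥ 1` then `c^p ≡ 1 [p^(m+1)]`. -/
private lemma pow_p_cong (p m : ℕ) (hm : 1 ≤ m) (c : ℤ)
    (hc : c ≡ 1 [ZMOD ((p : ℤ) ^ m)]) : c ^ p ≡ 1 [ZMOD ((p : ℤ) ^ (m + 1))] := by
  have h1 : (p : ℤ) ^ m ∣ c - 1 := by
    have := Int.modEq_iff_dvd.mp hc
    simpa using (dvd_neg.mpr this)
  have hp1 : (p : ℤ) ∣ c - 1 := dvd_trans (dvd_pow_self _ (Nat.one_le_iff_ne_zero.mp hm)) h1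
  have hcp : c ≡ 1 [ZMOD (p : ℤ)] := by
    rw [Int.modEq_iff_dvd]
    simpa using dvd_neg.mpr hp1
  have h2 : (p : ℤ) ∣ ∑ i ∈ Finset.range p, c ^ i := by
    have hz : ((∑ i ∈ Finset.range p, c ^ i : ℤ) : ZMod p) = 0 := by
      push_cast
      have hc1 : ((c : ZMod p)) = 1 := by
        rw [show (1 : ZMod p) = ((1 : ℤ) : ZMod p) by simp, ZMod.intCast_eq_intCast_iff]
        exact_mod_cast hcp
      rw [Finset.sum_congr rfl (fun i _ => by rw [hc1, one_pow])]
      simp [ZMod.natCast_self]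
    exact (ZMod.intCast_zmod_eq_zero_iff_dvd _ p).mp hz
  have h3 : (p : ℤ) ^ (m + 1) ∣ c ^ p - 1 := by
    rw [← geom_sum_mul, pow_succ']
    exact mul_dvd_mul h2 h1
  rw [Int.modEq_iff_dvd]
  simpa using dvd_neg.mpr h3

/-- Key step: if `a ≡ b [p^m]` and `q^a ≡ q^b [p^m]` (with `q` coprime to `p`, `m ≥ 1`),
then `q^a ≡ q^b [p^(m+1)]`. -/
private lemma key_step (p m : ℕ) (hp : p.Prime) (hm : 1 ≤ m) (q : ℤ)
    (hq : IsCoprime q (p : ℤ)) (a b : ℕ)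
    (hab : (a : ZMod (p ^ m)) = (b : ZMod (p ^ m)))
    (h1 : ((q ^ a : ℤ) : ZMod (p ^ m)) = ((q ^ b : ℤ) : ZMod (p ^ m))) :
    ((q ^ a : ℤ) : ZMod (p ^ (m + 1))) = ((q ^ b : ℤ) : ZMod (p ^ (m + 1))) := by
  wlog hba : b ≤ a generalizing a b
  · exact (this b a hab.symm h1.symm (le_of_not_ge hba)).symm
  haveI : NeZero (p ^ m) := ⟨pow_ne_zero _ hp.ne_zero⟩
  have h2p := hp.two_le
  have hmod : a ≡ b [MOD p ^ m] := (ZMod.natCast_eq_natCast_iff _ _ _).mp hab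
  have hdvd : p ^ m ∣ a - b := (Nat.modEq_iff_dvd' hba).mp hmod.symm
  obtain ⟨s, hs⟩ := hdvd
  have ha : a = b + p ^ m * s := by omega
  obtain ⟨u, hu⟩ := isUnit_intCast_zmod q (p ^ m) (by push_cast; exact hq.pow_right)
  have hu1 : u ^ a = u ^ b := by
    apply Units.ext
    rw [Units.val_pow_eq_pow_val, Units.val_pow_eq_pow_val, hu]
    push_cast at h1
    exact h1
  have hus : (u ^ s) ^ (p ^ m) = 1 := by
    have h5 : u ^ b * (u ^ s) ^ (p ^ m) = u ^ b * 1 := by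
      rw [mul_one, ← pow_mul, ← pow_add, mul_comm s (p ^ m), ← ha, hu1]
    exact mul_left_cancel h5
  have hordm : orderOf (u ^ s) ∣ p ^ m := orderOf_dvd_of_pow_eq_one hus
  have hordt : orderOf (u ^ s) ∣ p ^ (m - 1) * (p - 1) := by
    have := orderOf_dvd_of_pow_eq_one (ZMod.pow_totient (u ^ s))
    rwa [Nat.totient_prime_pow hp hm] at this
  obtain ⟨j, hjm, hj⟩ := (Nat.dvd_prime_pow hp).mp hordm
  have hcop : Nat.Coprime p (p - 1) :=
    (Nat.Prime.coprime_iff_not_dvd hp).mpr (Nat.not_dvd_of_pos_of_lt (by omega) (by omega))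
  have hdvd2 : orderOf (u ^ s) ∣ p ^ (m - 1) := by
    rw [hj] at hordt ⊢
    exact (Nat.Coprime.dvd_of_dvd_mul_right (Nat.Coprime.pow_left _ hcop) hordt)
  have h4 : (u ^ s) ^ p ^ (m - 1) = 1 := orderOf_dvd_iff_pow_eq_one.mp hdvd2
  have hc : (q ^ (s * p ^ (m - 1)) : ℤ) ≡ 1 [ZMOD ((p : ℤ) ^ m)] := by
    have h6 := congrArg (Units.val) h4
    rw [Units.val_one, Units.val_pow_eq_pow_val, Units.val_pow_eq_pow_val, hu] at h6
    have h7 : ((q ^ (s * p ^ (m - 1)) : ℤ) : ZMod (p ^ m)) = ((1 : ℤ) : ZMod (p ^ m)) := by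
      push_cast
      rw [pow_mul]
      exact h6
    have h8 := (ZMod.intCast_eq_intCast_iff _ _ _).mp h7
    push_cast at h8
    exact h8
  have hfinal := pow_p_cong p m hm _ hc
  have hexp : (q ^ (s * p ^ (m - 1))) ^ p = q ^ (p ^ m * s) := by
    rw [← pow_mul]
    congr 1
    have hmm : m - 1 + 1 = m := by omega
    rw [mul_assoc, ← pow_succ, hmm, mul_comm]
  rw [hexp] at hfinal
  rw [ZMod.intCast_eq_intCast_iff]
  have hmodulus : ((p ^ (m + 1) : ℕ) : ℤ) = (p : ℤ) ^ (m + 1) := by push_cast; ring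
  rw [hmodulus]
  calc (q ^ a : ℤ) = q ^ b * q ^ (p ^ m * s) := by rw [ha, pow_add]
    _ ≡ q ^ b * 1 [ZMOD ((p : ℤ) ^ (m + 1))] := Int.ModEq.mul_left _ hfinal
    _ = q ^ b := by ring

theorem card_periodicPts_expMap_le (p n k : ℕ) (q : ℤ) [Fact p.Prime]
    (hn : 0 < n) (hk : 0 < k) (hq : IsCoprime q (p : ℤ)) :
    {x : ZMod (p ^ n) | (expMap p n q)^[k] x = x}.ncard ≤ (p - 1) ^ k := by
  classical
  have hp : p.Prime := Fact.out
  haveI : NeZero (p ^ n) := ⟨pow_ne_zero _ hp.ne_zero⟩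
  haveI : NeZero p := ⟨hp.ne_zero⟩
  set f : ZMod (p ^ n) → ZMod (p ^ n) := expMap p n q with hf
  set S : Set (ZMod (p ^ n)) := {x | f^[k] x = x} with hS
  -- casting the value of an element known to be an integer cast
  have hcastval : ∀ (M : ℕ), M ∣ p ^ n → ∀ (z : ZMod (p ^ n)) (c : ℤ),
      z = (c : ZMod (p ^ n)) → ((z.val : ℤ) : ZMod M) = (c : ZMod M) := by
    intro M hM z c hz
    have h1 : ((z.val : ℤ) : ZMod (p ^ n)) = (c : ZMod (p ^ n)) := by
      push_cast
      rw [ZMod.natCast_val, ZMod.cast_id]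
      exact hz
    rw [ZMod.intCast_eq_intCast_iff] at h1 ⊢
    exact Int.ModEq.of_dvd (Int.natCast_dvd_natCast.mpr hM) h1
  -- iterates (at positive time) are powers of q
  have hiter : ∀ (x : ZMod (p ^ n)) (i : ℕ),
      f^[i + 1] x = ((q ^ (f^[i] x).val : ℤ) : ZMod (p ^ n)) := by
    intro x i
    rw [Function.iterate_succ_apply']
    show (q : ZMod (p ^ n)) ^ (f^[i] x).val = _
    push_cast
    rfl
  -- all iterates of periodic points are powers of q
  have hper : ∀ x ∈ S, ∀ i : ℕ, ∃ e : ℕ, f^[i] x = ((q ^ e : ℤ) : ZMod (p ^ n)) := by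
    intro x hx i
    refine ⟨(f^[i + k - 1] x).val, ?_⟩
    have h1 : f^[i] x = f^[(i + k - 1) + 1] x := by
      rw [show (i + k - 1) + 1 = i + k by omega, Function.iterate_add_apply, hx]
    rw [h1, hiter]
  have hq0 : (q : ZMod p) ≠ 0 := by
    intro h
    have hd := (ZMod.intCast_zmod_eq_zero_iff_dvd q p).mp h
    have := hq.isUnit_of_dvd' hd dvd_rfl
    rw [Int.isUnit_iff] at this
    have h2p := hp.two_le
    omega
  set φ : ZMod (p ^ n) → (Fin k → ZMod p) := fun x i => (((f^[(i : ℕ)] x).val : ℤ) : ZMod p)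
    with hφ
  have hinj : Set.InjOn φ S := by
    intro x hx y hy hxy
    have hxp : Function.IsPeriodicPt f k x := hx
    have hyp : Function.IsPeriodicPt f k y := hy
    have hall : ∀ i : ℕ, (((f^[i] x).val : ℤ) : ZMod p) = (((f^[i] y).val : ℤ) : ZMod p) := by
      intro i
      have h1 := congrFun hxy ⟨i % k, Nat.mod_lt i hk⟩
      simp only [hφ] at h1
      rwa [hxp.iterate_mod_apply i, hyp.iterate_mod_apply i] at h1
    have main : ∀ m, 1 ≤ m → m ≤ n → ∀ i : ℕ,
        (((f^[i] x).val : ℤ) : ZMod (p ^ m)) = (((f^[i] y).val : ℤ) : ZMod (p ^ m)) := by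
      intro m
      induction m with
      | zero => omega
      | succ m ih =>
        intro _ hmn i
        by_cases hm0 : m = 0
        · subst hm0
          have h1 := hall i
          rw [ZMod.intCast_eq_intCast_iff] at h1 ⊢
          have : ((p ^ (0 + 1) : ℕ) : ℤ) = (p : ℤ) := by push_cast; ring
          rw [this]
          exact_mod_cast h1
        · have hm1 : 1 ≤ m := by omega
          have ihm := ih hm1 (by omega)
          have hdm1 : p ^ (m + 1) ∣ p ^ n := pow_dvd_pow p hmn
          have hdm : p ^ m ∣ p ^ n := pow_dvd_pow p (by omega)
          have hsucc : ∀ j : ℕ,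
              (((f^[j + 1] x).val : ℤ) : ZMod (p ^ (m + 1)))
                = (((f^[j + 1] y).val : ℤ) : ZMod (p ^ (m + 1))) := by
            intro j
            have hfx := hiter x j
            have hfy := hiter y j
            rw [hcastval _ hdm1 _ _ hfx, hcastval _ hdm1 _ _ hfy]
            apply key_step p m hp hm1 q hq
            · have h2 := ihm j
              exact_mod_cast h2
            · have h2 := ihm (j + 1)
              rw [hcastval _ hdm _ _ hfx, hcastval _ hdm _ _ hfy] at h2
              exact h2
          cases i with
          | zero =>
            have h3 := hsucc (k - 1)
            rw [show k - 1 + 1 = k by omega] at h3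
            simp only [Function.iterate_zero_apply]
            rwa [hxp, hyp] at h3
          | succ j => exact hsucc j
    have h4 := main n hn le_rfl 0
    simp only [Function.iterate_zero_apply] at h4
    have hx' : ((x.val : ℤ) : ZMod (p ^ n)) = x := by
      push_cast; rw [ZMod.natCast_val, ZMod.cast_id]
    have hy' : ((y.val : ℤ) : ZMod (p ^ n)) = y := by
      push_cast; rw [ZMod.natCast_val, ZMod.cast_id]
    rwa [hx', hy'] at h4
  have himg : φ '' S ⊆ {v : Fin k → ZMod p | ∀ i, v i ≠ 0} := by
    rintro _ ⟨x, hx, rfl⟩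
    intro i h0
    obtain ⟨e, he⟩ := hper x hx i
    simp only [hφ] at h0
    rw [hcastval p (dvd_pow_self p hn.ne') _ _ he] at h0
    push_cast at h0
    exact pow_ne_zero e hq0 h0
  have hcardT : {v : Fin k → ZMod p | ∀ i, v i ≠ 0}.ncard = (p - 1) ^ k := by
    rw [← Nat.card_coe_set_eq]
    have e : ↥{v : Fin k → ZMod p | ∀ i, v i ≠ 0} ≃ (Fin k → {a : ZMod p // a ≠ 0}) :=
      { toFun := fun v i => ⟨v.1 i, v.2 i⟩
        invFun := fun w => ⟨fun i => (w i).1, fun i => (w i).2⟩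
        left_inv := fun v => rfl
        right_inv := fun w => rfl }
    rw [Nat.card_congr e, Nat.card_pi]
    have hcard : Nat.card {a : ZMod p // a ≠ 0} = p - 1 := by
      have e2 : (ZMod p)ˣ ≃ {a : ZMod p // a ≠ 0} := unitsEquivNeZero
      rw [← Nat.card_congr e2, Nat.card_eq_fintype_card, ZMod.card_units_eq_totient,
        Nat.totient_prime hp]
    simp [hcard]
  calc S.ncard = (φ '' S).ncard := (Set.ncard_image_of_injOn hinj).symm
    _ ≤ {v : Fin k → ZMod p | ∀ i, v i ≠ 0}.ncard := Set.ncard_le_ncard himg (Set.toFinite _)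
    _ = (p - 1) ^ k := hcardT
end

section
/- Let p be a prime, n ≥ 2 an integer, and q an integer coprime to p. For x ∈ ℤ define O^n(x) = { w ∈ ZMod (p^n) : ∃ y ∈ ℕ, y ≡ x (mod p^n) and w ≡ q^y (mod p^n) }. If x ≡ x' (mod p^{n-1}), then O^n(x) = O^n(x'). -/
/-- The set of out-neighbors of `x` in the exponentiation graph modulo `p^n`:
residues modulo `p^n` of `q^y` over all natural numbers `y ≡ x (mod p^n)`. -/
def outNbrs (p n : ℕ) (q x : ℤ) : Set (ZMod (p ^ n)) :=
  {w | ∃ y : ℕ, ((y : ℤ) : ZMod (p ^ n)) = (x : ZMod (p ^ n)) ∧ (q : ZMod (p ^ n)) ^ y = w}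

lemma outNbrs_subset_of_modEq (p n : ℕ) (q : ℤ) (hp : p.Prime) (hn : 2 ≤ n)
    (hq : IsCoprime q (p : ℤ)) (x x' : ℤ) (h : x ≡ x' [ZMOD (p ^ (n - 1) : ℕ)]) :
    outNbrs p n q x ⊆ outNbrs p n q x' := by
  intro w hw
  obtain ⟨y, hy1, hy2⟩ := hw
  have hpn : (0:ℕ) < p ^ n := pow_pos hp.pos n
  haveI : NeZero (p ^ n) := ⟨hpn.ne'⟩
  set Q : ZMod (p ^ n) := ((q : ℤ) : ZMod (p ^ n)) with hQ
  have hu : IsUnit Q := by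
    have h1 : IsCoprime ((q : ℤ) : ZMod (p ^ n)) (((p : ℤ) ^ n : ℤ) : ZMod (p ^ n)) :=
      (hq.pow_right (n := n)).map (Int.castRingHom (ZMod (p ^ n)))
    have h2 : (((p : ℤ) ^ n : ℤ) : ZMod (p ^ n)) = 0 := by
      push_cast
      exact_mod_cast ZMod.natCast_self (p ^ n)
    rw [h2, isCoprime_zero_right] at h1
    exact h1
  set d := orderOf Q with hd
  have hdu : d = orderOf hu.unit := by rw [hd, ← orderOf_units, hu.unit_spec]
  have hdpos : 0 < d := by rw [hdu]; exact orderOf_pos _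
  have hddvd : d ∣ p ^ (n - 1) * (p - 1) := by
    have := orderOf_dvd_card (G := (ZMod (p ^ n))ˣ) (x := hu.unit)
    rw [← hdu] at this
    rwa [ZMod.card_units_eq_totient, Nat.totient_prime_pow hp (by omega)] at this
  set a := d.factorization p with ha
  set e := d / p ^ a with he
  have hde : p ^ a * e = d := Nat.ordProj_mul_ordCompl_eq_self d p
  have hpe : Nat.Coprime p e := hp.coprime_iff_not_dvd.mpr (Nat.not_dvd_ordCompl hp hdpos.ne')
  have hpa : p ^ a ∣ p ^ (n - 1) := by
    have h1 : p ^ a ∣ p ^ (n - 1) * (p - 1) := dvd_trans (Nat.ordProj_dvd d p) hddvd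
    have h2 : Nat.Coprime (p ^ a) (p - 1) := by
      have hp2 : 2 ≤ p := hp.two_le
      have hps : Nat.Coprime p (p - 1) := hp.coprime_iff_not_dvd.mpr
        (fun hdvd => by have := Nat.le_of_dvd (by omega) hdvd; omega)
      exact hps.pow_left a
    exact h2.dvd_of_dvd_mul_right h1
  -- CRT: find T ≡ x' - x mod p^n with e ∣ T
  have hcop : IsCoprime (e : ℤ) ((p ^ n : ℕ) : ℤ) :=
    Nat.isCoprime_iff_coprime.mpr ((hpe.symm).pow_right n)
  obtain ⟨A, B, hAB⟩ := hcop
  set T : ℤ := (x' - x) * (A * e) with hT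
  have heT : (e : ℤ) ∣ T := ⟨(x' - x) * A, by ring⟩
  have hTmod : T ≡ x' - x [ZMOD ((p ^ n : ℕ) : ℤ)] := by
    have h3 : T - (x' - x) = ((p ^ n : ℕ) : ℤ) * (-(x' - x) * B) := by
      rw [hT]; linear_combination (x' - x) * hAB
    exact (Int.modEq_iff_dvd.mpr ⟨-(x' - x) * B, h3⟩).symm
  have hpandvd : ((p : ℤ) ^ (n - 1)) ∣ x' - x := by
    have := h.dvd
    push_cast at this
    exact this
  have hpaT : ((p ^ a : ℕ) : ℤ) ∣ T := by
    have h1 : ((p ^ a : ℕ) : ℤ) ∣ x' - x := by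
      refine dvd_trans ?_ hpandvd
      exact_mod_cast (Int.natCast_dvd_natCast.mpr hpa)
    exact Dvd.dvd.mul_right h1 _
  have hdT : (d : ℤ) ∣ T := by
    have hcop2 : IsCoprime ((p ^ a : ℕ) : ℤ) ((e : ℕ) : ℤ) :=
      Nat.isCoprime_iff_coprime.mpr (hpe.pow_left a)
    have := hcop2.mul_dvd hpaT heT
    rwa [← Nat.cast_mul, hde] at this
  -- turn T into a natural number t
  set M : ℕ := p ^ n * d with hM
  have hMpos : (0:ℤ) < (M : ℤ) := by positivity
  set t : ℕ := (T % (M : ℤ)).toNat with ht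
  have htZ : (t : ℤ) = T % (M : ℤ) := Int.toNat_of_nonneg (Int.emod_nonneg T hMpos.ne')
  have hdM : (d : ℤ) ∣ (M : ℤ) := Int.natCast_dvd_natCast.mpr (dvd_mul_left d (p ^ n))
  have hpnM : ((p ^ n : ℕ) : ℤ) ∣ (M : ℤ) := Int.natCast_dvd_natCast.mpr (dvd_mul_right _ d)
  have hdt : d ∣ t := by
    have h3 : (d : ℤ) ∣ (t : ℤ) := by
      rw [htZ, Int.emod_def]
      exact dvd_sub hdT (hdM.mul_right _)
    exact_mod_cast h3
  have htmod : (t : ℤ) ≡ x' - x [ZMOD ((p ^ n : ℕ) : ℤ)] := by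
    have h3 : (t : ℤ) ≡ T [ZMOD ((p ^ n : ℕ) : ℤ)] := by
      rw [htZ]; exact Int.emod_emod_of_dvd T hpnM
    exact h3.trans hTmod
  refine ⟨y + t, ?_, ?_⟩
  · have h1 : ((t : ℤ) : ZMod (p ^ n)) = ((x' - x : ℤ) : ZMod (p ^ n)) := by
      rw [ZMod.intCast_eq_intCast_iff]
      exact_mod_cast htmod
    push_cast [h1] at hy1 ⊢
    push_cast at h1
    rw [hy1]
    ring
  · have hQt : Q ^ t = 1 := orderOf_dvd_iff_pow_eq_one.mp hdt
    show Q ^ (y + t) = w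
    rw [pow_add, hQt, mul_one, hy2]

theorem outNbrs_eq_of_modEq (p n : ℕ) (q : ℤ) (hp : p.Prime) (hn : 2 ≤ n)
    (hq : IsCoprime q (p : ℤ)) (x x' : ℤ) (h : x ≡ x' [ZMOD (p ^ (n - 1) : ℕ)]) :
    outNbrs p n q x = outNbrs p n q x' :=
  subset_antisymm (outNbrs_subset_of_modEq p n q hp hn hq x x' h)
    (outNbrs_subset_of_modEq p n q hp hn hq x' x h.symm)
end
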